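/- Consider the incremental algorithm with iterates $x_{k+1} = x_{k,m}$ where $x_{k,0} = x_k$ and $x_{k,i+1} = \mathcal{P}_X(x_{k,i} - \gamma_k(g_{f_{i+1}}(x_{k,i}) + \frac{\lambda_k}{m} g_h(x_{k,i})))$. If $0 < \gamma_k \lambda_k \mu_h \leq 2m$, then $\|x_{k+1} - x_{\lambda_k}^*\|^2 \leq (1 - \frac{\gamma_k \lambda_k \mu_h}{m})\|x_k - x_{\lambda_k}^*\|^2 + 6 m^2 \gamma_k^2 (C_f^2 + \lambda_k^2 C_h^2)$, where $x_{\lambda_k}^*$ is the unique minimizer of $f + \lambda_k h$ over $X$. -/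

import Mathlib

open Filter Finset Real Set
open scoped RealInnerProductSpace Topology BigOperators

set_option maxHeartbeats 1000000

noncomputable section

abbrev Euc (n : ℕ) := EuclideanSpace ℝ (Fin n)

/-- `g` is a subgradient of `f` at `x`. -/
def IsSubgradAt {n : ℕ} (f : Euc n → ℝ) (x g : Euc n) : Prop :=
  ∀ y, f x + (inner ℝ g (y - x) : ℝ) ≤ f y

/-- `y` is the Euclidean projection of `p` onto `X`. -/
def IsProjOn {n : ℕ} (X : Set (Euc n)) (p y : Euc n) : Prop :=
  y ∈ X ∧ ∀ z ∈ X, ‖p - y‖ ≤ ‖p - z‖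

lemma le_of_forall_small {a b K : ℝ} (hK : 0 ≤ K)
    (H : ∀ t : ℝ, 0 < t → t < 1 → a ≤ b + t * K) : a ≤ b := by
  refine le_of_forall_pos_le_add fun ε hε => ?_
  set t := min (2⁻¹ : ℝ) (ε / (K + 1)) with ht
  have htpos : 0 < t := lt_min (by norm_num) (by positivity)
  have ht1 : t < 1 := lt_of_le_of_lt (min_le_left _ _) (by norm_num)
  have h3 : t ≤ ε / (K + 1) := min_le_right _ _
  have h4 : t * (K + 1) ≤ ε := by
    rw [← le_div_iff₀ (by linarith : (0:ℝ) < K + 1)]; exact h3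
  have := H t htpos ht1
  nlinarith

lemma proj_var_ineq {n : ℕ} {X : Set (Euc n)} (hXcv : Convex ℝ X) {p y z : Euc n}
    (hy : IsProjOn X p y) (hz : z ∈ X) : ⟪p - y, z - y⟫ ≤ 0 := by
  have key : ∀ t : ℝ, 0 < t → t < 1 → ⟪p - y, z - y⟫ ≤ 0 + t * (‖z - y‖ ^ 2 / 2) := by
    intro t ht0 ht1
    have hmem : y + t • (z - y) ∈ X := by
      have := hXcv hy.1 hz (by linarith : (0:ℝ) ≤ 1 - t) (le_of_lt ht0) (by ring)
      convert this using 1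
      rw [smul_sub]
      module
    have hle := hy.2 _ hmem
    have hEq : ‖p - (y + t • (z - y))‖ ^ 2
        = ‖p - y‖ ^ 2 - 2 * t * ⟪p - y, z - y⟫ + t ^ 2 * ‖z - y‖ ^ 2 := by
      have h1 : p - (y + t • (z - y)) = (p - y) - t • (z - y) := by abel
      rw [h1, norm_sub_sq_real, real_inner_smul_right, norm_smul, Real.norm_eq_abs,
        mul_pow, sq_abs]
      ring
    have hle2 : ‖p - y‖ ^ 2 ≤ ‖p - (y + t • (z - y))‖ ^ 2 :=
      pow_le_pow_left₀ (norm_nonneg _) hle 2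
    rw [hEq] at hle2
    nlinarith
  exact le_of_forall_small (by positivity) key

lemma proj_contract {n : ℕ} {X : Set (Euc n)} (hXcv : Convex ℝ X) {p y z : Euc n}
    (hy : IsProjOn X p y) (hz : z ∈ X) : ‖y - z‖ ≤ ‖p - z‖ := by
  have hchar := proj_var_ineq hXcv hy hz
  have hexp : ‖p - z‖ ^ 2 = ‖p - y‖ ^ 2 + 2 * ⟪p - y, y - z⟫ + ‖y - z‖ ^ 2 := by
    have h1 := norm_add_sq_real (p - y) (y - z)
    rwa [sub_add_sub_cancel] at h1
  have h2 : ⟪p - y, y - z⟫ = -⟪p - y, z - y⟫ := by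
    rw [← inner_neg_right]; congr 1; abel
  have hsq : ‖y - z‖ ^ 2 ≤ ‖p - z‖ ^ 2 := by nlinarith [norm_nonneg (p - y)]
  have := Real.sqrt_le_sqrt hsq
  rwa [Real.sqrt_sq (norm_nonneg _), Real.sqrt_sq (norm_nonneg _)] at this

lemma inner_ge_of_norm_le {n : ℕ} {g : Euc n} {c : ℝ} (hgc : ‖g‖ ≤ c) (v : Euc n) :
    -(c * ‖v‖) ≤ ⟪g, v⟫ := by
  have h1 := abs_real_inner_le_norm g v
  have h2 := (abs_le.mp h1).1
  have h3 : ‖g‖ * ‖v‖ ≤ c * ‖v‖ := mul_le_mul_of_nonneg_right hgc (norm_nonneg v)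
  linarith

/-- one-step contraction toward the regularized minimizer. -/
theorem one_step_contraction {n : ℕ} (X : Set (Euc n))
    (hXne : X.Nonempty) (hXcp : IsCompact X) (hXcv : Convex ℝ X)
    (m : ℕ) (hm : 1 ≤ m)
    (fi : Fin m → Euc n → ℝ) (hfi : ∀ i, ConvexOn ℝ Set.univ (fi i))
    (f : Euc n → ℝ) (hfdef : f = fun y => ∑ i, fi i y)
    (h : Euc n → ℝ) (μ : ℝ) (hμ : 0 < μ) (hh : StrongConvexOn Set.univ μ h)
    (Cf Ch : ℝ)
    (gf : Fin m → Euc n → Euc n) (gh : Euc n → Euc n)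
    (hgf : ∀ i, ∀ y ∈ X, IsSubgradAt (fi i) y (gf i y) ∧ ‖gf i y‖ ≤ Cf)
    (hgh : ∀ y ∈ X, IsSubgradAt h y (gh y) ∧ ‖gh y‖ ≤ Ch)
    (hCf : ∀ i, ∀ y ∈ X, ∀ g, IsSubgradAt (fi i) y g → ‖g‖ ≤ Cf)
    (hChb : ∀ y ∈ X, ∀ g, IsSubgradAt h y g → ‖g‖ ≤ Ch)
    (xlam : ℝ → Euc n)
    (hxlam : ∀ l, 0 < l → xlam l ∈ X ∧
      ∀ y ∈ X, f (xlam l) + l * h (xlam l) ≤ f y + l * h y)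
    (γk lamk : ℝ) (hγk : 0 < γk) (hlamk : 0 < lamk)
    (hstep : γk * lamk * μ ≤ 2 * (m : ℝ))
    (xk : Euc n) (hxk : xk ∈ X)
    (xi : ℕ → Euc n) (hxi0 : xi 0 = xk)
    (hrec : ∀ i (hi : i < m),
      IsProjOn X
        (xi i - γk • (gf ⟨i, hi⟩ (xi i) + (lamk / (m : ℝ)) • gh (xi i)))
        (xi (i + 1))) :
    ‖xi m - xlam lamk‖ ^ 2 ≤
      (1 - γk * lamk * μ / (m : ℝ)) * ‖xk - xlam lamk‖ ^ 2 +
        6 * (m : ℝ) ^ 2 * γk ^ 2 * (Cf ^ 2 + lamk ^ 2 * Ch ^ 2) := by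
  obtain ⟨hxsX, hxsmin⟩ := hxlam lamk hlamk
  set xs := xlam lamk with hxs
  have hm0 : (0:ℝ) < m := by exact_mod_cast Nat.lt_of_lt_of_le Nat.zero_lt_one hm
  have hm1 : (1:ℝ) ≤ m := by exact_mod_cast hm
  have hCf0 : 0 ≤ Cf := le_trans (norm_nonneg _) ((hgf ⟨0, hm⟩ xk hxk).2)
  have hCh0 : 0 ≤ Ch := le_trans (norm_nonneg _) ((hgh xk hxk).2)
  set C : ℝ := Cf + lamk / m * Ch with hC
  have hq0 : 0 ≤ lamk / m := by positivity
  have hC0 : 0 ≤ C := by positivity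
  -- extended family
  set F' : ℕ → Euc n → ℝ := fun j y => if hj : j < m then fi ⟨j, hj⟩ y else 0 with hF'
  -- main induction
  have key : ∀ i, i ≤ m → (xi i ∈ X ∧ ‖xi i - xk‖ ≤ i * (γk * C)) ∧
      ‖xi i - xs‖ ^ 2 ≤ ‖xk - xs‖ ^ 2
        - 2 * γk * ((∑ j ∈ Finset.range i, (F' j xk - F' j xs))
            + i * (lamk / m) * (h xk - h xs))
        + i * ((2 * m + 1) * γk ^ 2 * C ^ 2) := by
    intro i
    induction i with
    | zero =>
      intro _
      refine ⟨⟨hxi0 ▸ hxk, by simp [hxi0]⟩, ?_⟩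
      simp [hxi0]
    | succ i ih =>
      intro hi1
      have hi : i < m := hi1
      obtain ⟨⟨hmemi, hdispi⟩, hmaini⟩ := ih (le_of_lt hi)
      set G : Euc n := gf ⟨i, hi⟩ (xi i) + (lamk / m) • gh (xi i) with hG
      have hproj := hrec i hi
      have hmem1 : xi (i + 1) ∈ X := hproj.1
      -- bound on G
      have hGnorm : ‖G‖ ≤ C := by
        calc ‖G‖ ≤ ‖gf ⟨i, hi⟩ (xi i)‖ + ‖(lamk / m) • gh (xi i)‖ := norm_add_le _ _
        _ ≤ Cf + lamk / m * Ch := by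
            have h1 := (hgf ⟨i, hi⟩ (xi i) hmemi).2
            have h2 := (hgh (xi i) hmemi).2
            rw [norm_smul, Real.norm_eq_abs, abs_of_nonneg hq0]
            exact add_le_add h1 (mul_le_mul_of_nonneg_left h2 hq0)
      -- displacement step
      have hdisp1 : ‖xi (i + 1) - xi i‖ ≤ γk * C := by
        have h1 := proj_contract hXcv hproj hmemi
        have h2 : xi i - γk • G - xi i = -(γk • G) := by abel
        rw [h2, norm_neg, norm_smul, Real.norm_eq_abs, abs_of_pos hγk] at h1
        exact le_trans h1 (mul_le_mul_of_nonneg_left hGnorm (le_of_lt hγk))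
      have hdisp : ‖xi (i + 1) - xk‖ ≤ (i + 1 : ℕ) * (γk * C) := by
        have h1 := norm_add_le (xi (i + 1) - xi i) (xi i - xk)
        rw [sub_add_sub_cancel] at h1
        push_cast
        calc ‖xi (i + 1) - xk‖ ≤ ‖xi (i + 1) - xi i‖ + ‖xi i - xk‖ := h1
        _ ≤ γk * C + i * (γk * C) := add_le_add hdisp1 hdispi
        _ = ((i:ℝ) + 1) * (γk * C) := by ring
      -- contraction step
      have hcon := proj_contract hXcv hproj hxsX
      have hconsq : ‖xi (i + 1) - xs‖ ^ 2 ≤ ‖xi i - γk • G - xs‖ ^ 2 :=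
        pow_le_pow_left₀ (norm_nonneg _) hcon 2
      have hEq : ‖xi i - γk • G - xs‖ ^ 2
          = ‖xi i - xs‖ ^ 2 - 2 * γk * ⟪G, xi i - xs⟫ + γk ^ 2 * ‖G‖ ^ 2 := by
        have h1 : xi i - γk • G - xs = (xi i - xs) - γk • G := by abel
        rw [h1, norm_sub_sq_real, real_inner_smul_right, norm_smul, Real.norm_eq_abs,
          mul_pow, sq_abs, real_inner_comm]
        ring
      -- lower bound on the inner product
      have hsubf := (hgf ⟨i, hi⟩ (xi i) hmemi).1 xs
      have hsubh := (hgh (xi i) hmemi).1 xs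
      have hflip : ∀ g : Euc n, (inner ℝ g (xs - xi i) : ℝ) = -⟪g, xi i - xs⟫ := by
        intro g; rw [← inner_neg_right]; congr 1; abel
      rw [hflip] at hsubf hsubh
      -- Lipschitz transfer to xk
      have hLf : fi ⟨i, hi⟩ xk - fi ⟨i, hi⟩ (xi i) ≤ Cf * ‖xi i - xk‖ := by
        have h1 := (hgf ⟨i, hi⟩ xk hxk).1 (xi i)
        have h2 := inner_ge_of_norm_le (hgf ⟨i, hi⟩ xk hxk).2 (xi i - xk)
        linarith
      have hLh : h xk - h (xi i) ≤ Ch * ‖xi i - xk‖ := by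
        have h1 := (hgh xk hxk).1 (xi i)
        have h2 := inner_ge_of_norm_le (hgh xk hxk).2 (xi i - xk)
        linarith
      have hdistm : ‖xi i - xk‖ ≤ m * (γk * C) := by
        refine le_trans hdispi ?_
        have hcast : (i:ℝ) ≤ m := by exact_mod_cast le_of_lt hi
        exact mul_le_mul_of_nonneg_right hcast (by positivity)
      have hinlow : fi ⟨i, hi⟩ xk - fi ⟨i, hi⟩ xs + (lamk / m) * (h xk - h xs)
          - C * (m * (γk * C)) ≤ ⟪G, xi i - xs⟫ := by
        have hsplit : ⟪G, xi i - xs⟫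
            = ⟪gf ⟨i, hi⟩ (xi i), xi i - xs⟫ + (lamk / m) * ⟪gh (xi i), xi i - xs⟫ := by
          rw [hG, inner_add_left, real_inner_smul_left]
        have e1 : fi ⟨i, hi⟩ (xi i) - fi ⟨i, hi⟩ xs ≤ ⟪gf ⟨i, hi⟩ (xi i), xi i - xs⟫ := by
          linarith
        have e2 : h (xi i) - h xs ≤ ⟪gh (xi i), xi i - xs⟫ := by linarith
        have e2' : (lamk / m) * (h (xi i) - h xs) ≤ (lamk / m) * ⟪gh (xi i), xi i - xs⟫ :=
          mul_le_mul_of_nonneg_left e2 hq0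
        have e3 : (lamk / m) * (h xk - h (xi i)) ≤ (lamk / m) * (Ch * ‖xi i - xk‖) :=
          mul_le_mul_of_nonneg_left hLh hq0
        have e4 : C * ‖xi i - xk‖ ≤ C * (m * (γk * C)) :=
          mul_le_mul_of_nonneg_left hdistm hC0
        have hCd : C * ‖xi i - xk‖ = Cf * ‖xi i - xk‖ + lamk / m * Ch * ‖xi i - xk‖ := by
          rw [hC]; ring
        rw [hsplit]
        clear_value G C xs
        linarith [e1, e2', e3, hLf, e4, hCd]
      -- put the step together
      have hF'i : F' i xk - F' i xs = fi ⟨i, hi⟩ xk - fi ⟨i, hi⟩ xs := by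
        simp [hF', hi]
      have hstep2 : ‖xi (i + 1) - xs‖ ^ 2 ≤ ‖xi i - xs‖ ^ 2
          - 2 * γk * ((F' i xk - F' i xs) + (lamk / m) * (h xk - h xs))
          + (2 * m + 1) * γk ^ 2 * C ^ 2 := by
        have e5a : ‖G‖ ^ 2 ≤ C ^ 2 := pow_le_pow_left₀ (norm_nonneg G) hGnorm 2
        have e5 : γk ^ 2 * ‖G‖ ^ 2 ≤ γk ^ 2 * C ^ 2 :=
          mul_le_mul_of_nonneg_left e5a (sq_nonneg γk)
        have e6 : 2 * γk * (fi ⟨i, hi⟩ xk - fi ⟨i, hi⟩ xs + (lamk / m) * (h xk - h xs)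
            - C * (m * (γk * C))) ≤ 2 * γk * ⟪G, xi i - xs⟫ :=
          mul_le_mul_of_nonneg_left hinlow (by positivity)
        rw [hF'i]
        clear_value G C xs
        linarith [hconsq, hEq.le, hEq.ge, e5, e6]
      refine ⟨⟨hmem1, hdisp⟩, ?_⟩
      rw [Finset.sum_range_succ]
      push_cast
      push_cast at hmaini
      linarith [hstep2, hmaini]
  -- conclude
  obtain ⟨-, hmain⟩ := key m le_rfl
  -- sum identity
  have hsum : ∀ y, ∑ j ∈ Finset.range m, F' j y = f y := by
    intro y
    rw [hfdef]
    rw [← Fin.sum_univ_eq_sum_range (fun j => F' j y) m]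
    refine Finset.sum_congr rfl fun j _ => ?_
    simp [hF', j.isLt]
  have hsum2 : ∑ j ∈ Finset.range m, (F' j xk - F' j xs) = f xk - f xs := by
    rw [Finset.sum_sub_distrib, hsum, hsum]
  rw [hsum2] at hmain
  have hmul : (m : ℝ) * (lamk / m) = lamk := by field_simp
  -- strong convexity gap at the minimizer
  have hgap : lamk * μ / 2 * ‖xk - xs‖ ^ 2 ≤ (f xk + lamk * h xk) - (f xs + lamk * h xs) := by
    refine le_of_forall_small (K := lamk * μ / 2 * ‖xk - xs‖ ^ 2) (by positivity) ?_
    intro t ht0 ht1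
    set z : Euc n := (1 - t) • xs + t • xk with hz
    have hzX : z ∈ X := hXcv hxsX hxk (by linarith) (le_of_lt ht0) (by ring)
    have hfz : f z ≤ (1 - t) * f xs + t * f xk := by
      rw [hfdef]
      simp only
      rw [Finset.mul_sum, Finset.mul_sum, ← Finset.sum_add_distrib]
      refine Finset.sum_le_sum fun j _ => ?_
      have := (hfi j).2 (Set.mem_univ xs) (Set.mem_univ xk)
        (by linarith : (0:ℝ) ≤ 1 - t) (le_of_lt ht0) (by ring)
      simpa [smul_eq_mul] using this
    have hhz : h z ≤ (1 - t) * h xs + t * h xk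
        - (1 - t) * t * (μ / 2 * ‖xs - xk‖ ^ 2) := by
      have := hh.2 (Set.mem_univ xs) (Set.mem_univ xk)
        (by linarith : (0:ℝ) ≤ 1 - t) (le_of_lt ht0) (by ring)
      simpa [smul_eq_mul] using this
    have hmin := hxsmin z hzX
    have hnorm : ‖xs - xk‖ = ‖xk - xs‖ := norm_sub_rev _ _
    rw [hnorm] at hhz
    set N : ℝ := ‖xk - xs‖ ^ 2 with hN
    have hN0 : 0 ≤ N := by positivity
    have hcomb : t * ((1 - t) * (lamk * μ / 2 * N)) ≤
        t * ((f xk + lamk * h xk) - (f xs + lamk * h xs)) := by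
      have hl := mul_le_mul_of_nonneg_left hhz (le_of_lt hlamk)
      linarith [hmin, hfz, hl]
    have hdiv := le_of_mul_le_mul_left hcomb ht0
    linarith
  -- final arithmetic
  set A : ℝ := ‖xk - xs‖ ^ 2 with hA
  have hA0 : 0 ≤ A := by positivity
  have c1 : C ^ 2 ≤ 2 * (Cf ^ 2 + lamk ^ 2 * Ch ^ 2) := by
    have h1 : lamk / m ≤ lamk := by
      rw [div_le_iff₀ hm0]; nlinarith
    have hsq : (lamk / m) ^ 2 ≤ lamk ^ 2 := pow_le_pow_left₀ hq0 h1 2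
    have := mul_le_mul_of_nonneg_right hsq (sq_nonneg Ch)
    rw [hC]
    nlinarith [sq_nonneg (Cf - lamk / m * Ch)]
  have c2a : (m : ℝ) * (2 * m + 1) ≤ 3 * m ^ 2 := by
    nlinarith [mul_le_mul_of_nonneg_left hm1 (le_of_lt hm0)]
  have c2 : (m : ℝ) * ((2 * m + 1) * γk ^ 2 * C ^ 2)
      ≤ 6 * m ^ 2 * γk ^ 2 * (Cf ^ 2 + lamk ^ 2 * Ch ^ 2) := by
    have hprod : (m : ℝ) * (2 * m + 1) * C ^ 2 ≤ 3 * m ^ 2 * (2 * (Cf ^ 2 + lamk ^ 2 * Ch ^ 2)) :=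
      mul_le_mul c2a c1 (sq_nonneg C) (by positivity)
    linarith [mul_le_mul_of_nonneg_left hprod (sq_nonneg γk)]
  have c3 : γk * lamk * μ / m ≤ γk * lamk * μ := by
    rw [div_le_iff₀ hm0]
    nlinarith [mul_pos (mul_pos hγk hlamk) hμ]
  have hgap2 : 2 * γk * (lamk * μ / 2 * A) ≤
      2 * γk * ((f xk - f xs) + m * (lamk / m) * (h xk - h xs)) := by
    rw [hmul]
    apply mul_le_mul_of_nonneg_left _ (by positivity : (0:ℝ) ≤ 2 * γk)
    linarith
  have hfac : (1 - γk * lamk * μ) * A ≤ (1 - γk * lamk * μ / m) * A := by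
    have := mul_le_mul_of_nonneg_right c3 hA0
    nlinarith
  clear_value A C xs
  linarith [hmain, hgap2, c2, hfac]
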